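/- Let π : T → [0,1] be a possibility contour with α-cuts C_α, let (K^β)_{β∈[0,1]} be a family of probability measures on T with K^β(C_β) = 1 for every β, and let M be a probability measure on [0,1] that is stochastically no smaller than Unif(0,1) (i.e., M([α,1]) ≥ 1−α for all α). Then the mixture Q(A) := ∫_0^1 K^β(A) dM(β) satisfies Q(C_α) ≥ 1−α for every α ∈ [0,1]. -/

import Mathlib

open MeasureTheory Set

/-- Sufficiency direction of the credal-set characterization: a mixture of
probability kernels supported on the α-cuts, over a mixing distribution
stochastically no smaller than Unif(0,1), assigns mass ≥ 1-α to each α-cut. -/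
theorem mixture_in_credal_set {T : Type*} [MeasurableSpace T] [Nonempty T]
    (π : T → ℝ) (hπ : Measurable π) (hrange : ∀ θ, π θ ∈ Set.Icc (0:ℝ) 1)
    (hsup : ⨆ θ, π θ = 1)
    (hcut : ∀ α : ℝ, MeasurableSet {θ : T | α ≤ π θ})
    (K : ℝ → Measure T) (hKprob : ∀ β, IsProbabilityMeasure (K β))
    (hKmeas : ∀ A : Set T, MeasurableSet A → Measurable fun β => K β A)
    (hKsupp : ∀ β ∈ Set.Icc (0:ℝ) 1, K β {θ : T | β ≤ π θ} = 1)
    (M : Measure ℝ) [IsProbabilityMeasure M] (hMsupp : M (Set.Icc (0:ℝ) 1) = 1)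
    (hMdom : ∀ α ∈ Set.Icc (0:ℝ) 1, ENNReal.ofReal (1 - α) ≤ M (Set.Icc α 1)) :
    ∀ α ∈ Set.Icc (0:ℝ) 1,
      ENNReal.ofReal (1 - α) ≤ ∫⁻ β, K β {θ : T | α ≤ π θ} ∂M := by
  intro α hα
  have key : ∀ β ∈ Set.Icc α 1, K β {θ : T | α ≤ π θ} = 1 := by
    intro β hβ
    have hβ01 : β ∈ Set.Icc (0:ℝ) 1 := ⟨le_trans hα.1 hβ.1, hβ.2⟩
    have hsub : {θ : T | β ≤ π θ} ⊆ {θ : T | α ≤ π θ} :=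
      fun θ hθ => le_trans hβ.1 hθ
    have := hKprob β
    refine le_antisymm prob_le_one ?_
    calc (1:ENNReal) = K β {θ : T | β ≤ π θ} := (hKsupp β hβ01).symm
      _ ≤ K β {θ : T | α ≤ π θ} := measure_mono hsub
  calc ENNReal.ofReal (1 - α) ≤ M (Set.Icc α 1) := hMdom α hα
    _ = ∫⁻ β in Set.Icc α 1, 1 ∂M := by
        simp [measurableSet_Icc]
    _ = ∫⁻ β in Set.Icc α 1, K β {θ : T | α ≤ π θ} ∂M := by
        refine setLIntegral_congr_fun measurableSet_Icc ?_
        exact fun β hβ => (key β hβ).symm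
    _ ≤ ∫⁻ β, K β {θ : T | α ≤ π θ} ∂M :=
        setLIntegral_le_lintegral _ _
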